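/- Let (X,d,μ) be complete, unbounded, Ahlfors Q-regular with Q > 1, supporting a suitable Poincaré inequality, with p > Q/2, and let (Ẋ, d̂_a, μ̂_a) be its sphericalization with dμ̂_a(x) = dμ(x)/(1+d(x,a))^{2p}. Then for all sufficiently small r > 0, μ̂_a(B̂(∞,r)) ≃ r^{2p-Q}, where B̂(∞,r) is the ball of radius r centered at ∞ in (Ẋ, d̂_a). -/

import Mathlib

open MeasureTheory Metric Set ENNReal Filter

/-- A (nonconstant, compact, rectifiable) curve with respect to a distance
function `D`, parameterized by arc length on `[0, len]`
(so that it is `1`-Lipschitz with respect to `D`). -/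
structure CurveD (Y : Type*) (D : Y → Y → ℝ) where
  toFun : ℝ → Y
  len : ℝ
  len_pos : 0 < len
  lip : ∀ s ∈ Set.Icc (0:ℝ) len, ∀ t ∈ Set.Icc (0:ℝ) len, D (toFun s) (toFun t) ≤ |s - t|

/-- The curve lies in the set `Ω`. -/
def CurveD.inSet {Y : Type*} {D : Y → Y → ℝ} (γ : CurveD Y D) (Ω : Set Y) : Prop :=
  ∀ t ∈ Set.Icc (0:ℝ) γ.len, γ.toFun t ∈ Ω

/-- Line integral `∫_γ ρ ds̃`, where the arc length element is `ds̃ = w ds`. -/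
noncomputable def lineInt {Y : Type*} {D : Y → Y → ℝ} (γ : CurveD Y D) (ρ w : Y → ℝ≥0∞) : ℝ≥0∞ :=
  ∫⁻ t in Set.Icc (0:ℝ) γ.len, ρ (γ.toFun t) * w (γ.toFun t)

/-- The `p`-modulus of a curve family `Γ`, with energy measure `μ` and arc
length weighted by `w`. -/
noncomputable def pMod {Y : Type*} [MeasurableSpace Y] {D : Y → Y → ℝ} (p : ℝ) (μ : Measure Y)
    (w : Y → ℝ≥0∞) (Γ : Set (CurveD Y D)) : ℝ≥0∞ :=
  ⨅ (ρ : Y → ℝ≥0∞) (_ : Measurable ρ) (_ : ∀ γ ∈ Γ, 1 ≤ lineInt γ ρ w), ∫⁻ y, ρ y ^ p ∂μ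

/-- The absolute value of an extended real, as an element of `[0,∞]`. -/
noncomputable def eAbs (x : EReal) : ℝ≥0∞ :=
  if max x (-x) = (⊤ : EReal) then ⊤ else ENNReal.ofReal (max x (-x)).toReal

/-- `g` is an upper gradient of `u : Ω → [-∞,∞]` (arc length weighted by `w`). -/
def IsUpperGradientOn {Y : Type*} (D : Y → Y → ℝ) (w : Y → ℝ≥0∞) (Ω : Set Y)
    (u : Y → EReal) (g : Y → ℝ≥0∞) : Prop :=
  ∀ γ : CurveD Y D, γ.inSet Ω →
    eAbs (u (γ.toFun γ.len) - u (γ.toFun 0)) ≤ lineInt γ g w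

/-- `g` is a `p`-weak upper gradient of `u` in `Ω`: the upper gradient
inequality holds along `p`-almost every curve. -/
def IsPWUGOn {Y : Type*} [MeasurableSpace Y] (D : Y → Y → ℝ) (p : ℝ) (μ : Measure Y)
    (w : Y → ℝ≥0∞) (Ω : Set Y) (u : Y → EReal) (g : Y → ℝ≥0∞) : Prop :=
  ∃ Γ₀ : Set (CurveD Y D), pMod p μ w Γ₀ = 0 ∧
    ∀ γ : CurveD Y D, γ.inSet Ω → γ ∉ Γ₀ →
      eAbs (u (γ.toFun γ.len) - u (γ.toFun 0)) ≤ lineInt γ g w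

/-- `g` has locally finite `p`-energy in `Ω`. -/
def IsLocLp {Y : Type*} [MetricSpace Y] [MeasurableSpace Y] (p : ℝ) (μ : Measure Y)
    (Ω : Set Y) (g : Y → ℝ≥0∞) : Prop :=
  ∀ x ∈ Ω, ∃ r > (0:ℝ), ∫⁻ y in Ω ∩ Metric.ball x r, g y ^ p ∂μ < ⊤

/-- `g` is the minimal `p`-weak upper gradient of `u` in `Ω`. -/
def IsMinimalPWUGOn {Y : Type*} [MetricSpace Y] [MeasurableSpace Y] (D : Y → Y → ℝ) (p : ℝ)
    (μ : Measure Y) (w : Y → ℝ≥0∞) (Ω : Set Y) (u : Y → EReal) (g : Y → ℝ≥0∞) : Prop :=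
  IsPWUGOn D p μ w Ω u g ∧ IsLocLp p μ Ω g ∧
    ∀ h : Y → ℝ≥0∞, IsPWUGOn D p μ w Ω u h → IsLocLp p μ Ω h →
      ∀ᵐ x ∂(μ.restrict Ω), g x ≤ h x

/-- The `p`-th power of the Newtonian norm of `u` on `Ω`. -/
noncomputable def NpNormP {Y : Type*} [MeasurableSpace Y] (D : Y → Y → ℝ) (p : ℝ)
    (μ : Measure Y) (w : Y → ℝ≥0∞) (Ω : Set Y) (u : Y → EReal) : ℝ≥0∞ :=
  (∫⁻ x in Ω, eAbs (u x) ^ p ∂μ) +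
    ⨅ (g : Y → ℝ≥0∞) (_ : IsUpperGradientOn D w Ω u g), ∫⁻ x in Ω, g x ^ p ∂μ

/-- The Sobolev capacity of `E`. -/
noncomputable def sobCap {Y : Type*} [MeasurableSpace Y] (D : Y → Y → ℝ) (p : ℝ)
    (μ : Measure Y) (w : Y → ℝ≥0∞) (E : Set Y) : ℝ≥0∞ :=
  ⨅ (u : Y → EReal) (_ : ∀ x ∈ E, 1 ≤ u x), NpNormP D p μ w Set.univ u

/-- The sphericalized arc length weight `ds̃ = ds/(1+d(x,a))²`. -/
noncomputable def hatW {X : Type*} [MetricSpace X] (a : X) : X → ℝ≥0∞ :=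
  fun x => ENNReal.ofReal ((1 + dist x a) ^ 2)⁻¹

/-- The sphericalization measure `dμ̂ₐ = dμ/(1+d(x,a))^{2p}`. -/
noncomputable def muHat {X : Type*} [MetricSpace X] [MeasurableSpace X] (μ : Measure X)
    (a : X) (p : ℝ) : Measure X :=
  μ.withDensity fun x => ENNReal.ofReal ((1 + dist x a) ^ (2 * p))⁻¹

/-- A `q`-Poincaré inequality for `(X,d,μ)`. -/
def PoincareIneqP {X : Type*} [MetricSpace X] [MeasurableSpace X] (q : ℝ) (μ : Measure X) : Prop :=
  ∃ C > (0:ℝ), ∃ lam ≥ (1:ℝ), ∀ (u : X → ℝ) (g : X → ℝ≥0∞), Measurable u → Measurable g →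
    MeasureTheory.LocallyIntegrable u μ →
    IsUpperGradientOn dist (fun _ => 1) Set.univ (fun x => (u x : EReal)) g →
    ∀ (x : X) (r : ℝ), 0 < r →
      ⨍⁻ y in Metric.ball x r, ENNReal.ofReal |u y - ⨍ z in Metric.ball x r, u z ∂μ| ∂μ ≤
        ENNReal.ofReal (C * Metric.diam (Metric.ball x r)) *
          (⨍⁻ y in Metric.ball x (lam * r), g y ^ q ∂μ) ^ (1/q)

/-- `μ` is doubling and all balls have positive finite measure. -/
def DoublingMeas {X : Type*} [MetricSpace X] [MeasurableSpace X] (μ : Measure X) : Prop :=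
  (∀ (x : X) (r : ℝ), 0 < r → 0 < μ (Metric.ball x r) ∧ μ (Metric.ball x r) < ⊤) ∧
    ∃ C > (0:ℝ), ∀ (x : X) (r : ℝ), 0 < r →
      μ (Metric.ball x (2 * r)) ≤ ENNReal.ofReal C * μ (Metric.ball x r)

/-- `μ` is Ahlfors `Q`-regular. -/
def AhlforsRegular {X : Type*} [MetricSpace X] [MeasurableSpace X] (μ : Measure X) (Q : ℝ) : Prop :=
  ∃ C > (0:ℝ), ∀ (x : X) (r : ℝ), 0 < r →
    ENNReal.ofReal (C⁻¹ * r ^ Q) ≤ μ (Metric.ball x r) ∧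
      μ (Metric.ball x r) ≤ ENNReal.ofReal (C * r ^ Q)

/-- The sphericalization quasimetric `d_a` on `Ẋ = X ∪ {∞}` (with `none = ∞`). -/
noncomputable def da {X : Type*} [MetricSpace X] (a : X) : Option X → Option X → ℝ
  | some x, some y => dist x y / ((1 + dist x a) * (1 + dist y a))
  | some x, none => (1 + dist x a)⁻¹
  | none, some y => (1 + dist y a)⁻¹
  | none, none => 0

/-- The sum `Σ d_a(x_j, x_{j-1})` along a finite chain. -/
noncomputable def chainSum {X : Type*} [MetricSpace X] (a : X) : List (Option X) → ℝ
  | x :: y :: l => da a x y + chainSum a (y :: l)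
  | _ => 0

/-- The sphericalization metric `d̂_a`: the infimum of `Σ d_a(x_j,x_{j-1})`
over all finite chains from `x` to `y` in `Ẋ`. -/
noncomputable def dhat {X : Type*} [MetricSpace X] (a : X) (x y : Option X) : ℝ :=
  sInf { s | ∃ l : List (Option X), (x :: l).getLast? = some y ∧ s = chainSum a (x :: l) }

noncomputable def fInf {X : Type*} [MetricSpace X] (a : X) : Option X → ℝ
  | some x => (1 + dist x a)⁻¹
  | none => 0

lemma fInf_sub_le_da {X : Type*} [MetricSpace X] (a : X) (u v : Option X) :
    fInf a u - fInf a v ≤ da a u v := by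
  cases u with
  | none =>
    cases v with
    | none => simp [fInf, da]
    | some y =>
      have hy : (0:ℝ) < (1 + dist y a)⁻¹ := by positivity
      simp only [fInf, da]
      linarith
  | some x =>
    cases v with
    | none => simp [fInf, da]
    | some y =>
      have hx : (0:ℝ) < 1 + dist x a := by positivity
      have hy : (0:ℝ) < 1 + dist y a := by positivity
      simp only [fInf, da]
      have key : (1 + dist x a)⁻¹ - (1 + dist y a)⁻¹
          = (dist y a - dist x a) / ((1 + dist x a) * (1 + dist y a)) := by
        field_simp
        ring
      rw [key]
      have h1 : dist y a ≤ dist y x + dist x a := dist_triangle y x a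
      have h2 : dist y x = dist x y := dist_comm y x
      gcongr
      linarith

lemma fInf_le_chainSum {X : Type*} [MetricSpace X] (a : X) :
    ∀ (l : List (Option X)) (u v : Option X), (u :: l).getLast? = some v →
      fInf a u - fInf a v ≤ chainSum a (u :: l) := by
  intro l
  induction l with
  | nil =>
    intro u v h
    have huv : u = v := by simpa using h
    subst huv
    have : chainSum a [u] = 0 := rfl
    simp [this]
  | cons w l ih =>
    intro u v h
    rw [List.getLast?_cons_cons] at h
    have h1 := ih w v h
    have h2 := fInf_sub_le_da a u w
    have h3 : chainSum a (u :: w :: l) = da a u w + chainSum a (w :: l) := rfl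
    rw [h3]
    linarith

lemma dhat_infty_eq {X : Type*} [MetricSpace X] (a x : X) :
    dhat a (some x) none = (1 + dist x a)⁻¹ := by
  have hmem : (1 + dist x a)⁻¹ ∈
      { s | ∃ l : List (Option X), ((some x) :: l).getLast? = some none ∧
        s = chainSum a ((some x) :: l) } := by
    refine ⟨[none], by simp, ?_⟩
    show (1 + dist x a)⁻¹ = da a (some x) none + chainSum a [none]
    have h1 : da a (some x) none = (1 + dist x a)⁻¹ := rfl
    have h2 : chainSum a [(none : Option X)] = 0 := rfl
    rw [h1, h2, add_zero]
  have hlb : ∀ s ∈ { s | ∃ l : List (Option X), ((some x) :: l).getLast? = some none ∧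
      s = chainSum a ((some x) :: l) }, (1 + dist x a)⁻¹ ≤ s := by
    rintro s ⟨l, hl, rfl⟩
    have := fInf_le_chainSum a l (some x) none hl
    simpa [fInf] using this
  apply le_antisymm
  · exact csInf_le ⟨_, hlb⟩ hmem
  · exact le_csInf ⟨_, hmem⟩ hlb

/-- For a complete, unbounded, Ahlfors `Q`-regular space supporting a
Poincaré inequality, with `p > Q/2`, the sphericalized measure of small balls
around `∞` satisfies `μ̂_a(B̂(∞,r)) ≃ r^{2p-Q}`. -/
theorem muHat_ball_at_infinity {X : Type*} [MetricSpace X] [MeasurableSpace X]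
    [BorelSpace X] [CompleteSpace X] (μ : Measure X)
    (hunb : ¬ Bornology.IsBounded (Set.univ : Set X))
    (Q : ℝ) (hQ : 1 < Q) (hAR : AhlforsRegular μ Q)
    (hPI : ∃ q ≥ (1:ℝ), PoincareIneqP q μ)
    (p : ℝ) (hp : Q / 2 < p) (a : X) :
    ∃ C > (0:ℝ), ∃ r₀ > (0:ℝ), ∀ r : ℝ, 0 < r → r < r₀ →
      ENNReal.ofReal (C⁻¹ * r ^ (2 * p - Q)) ≤
          (muHat μ a p) {x : X | dhat a (some x) none < r} ∧
        (muHat μ a p) {x : X | dhat a (some x) none < r} ≤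
          ENNReal.ofReal (C * r ^ (2 * p - Q)) := by
  classical
  obtain ⟨C₀, hC₀pos, hC₀⟩ := hAR
  have hQ0 : (0:ℝ) < Q := by linarith
  have h2p : Q < 2 * p := by linarith
  have hp0 : (0:ℝ) < p := by linarith
  -- C₀ ≥ 1
  have hC₀1 : 1 ≤ C₀ := by
    have h1 := hC₀ a 1 one_pos
    have h2 : ENNReal.ofReal (C₀⁻¹ * 1 ^ Q) ≤ ENNReal.ofReal (C₀ * 1 ^ Q) :=
      le_trans h1.1 h1.2
    rw [ENNReal.ofReal_le_ofReal_iff (by positivity), Real.one_rpow, mul_one, mul_one] at h2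
    nlinarith [mul_inv_cancel₀ hC₀pos.ne', mul_le_mul_of_nonneg_left h2 hC₀pos.le]
  -- choose S
  obtain ⟨k, hk⟩ := pow_unbounded_of_one_lt (C₀ ^ 2) (one_lt_two (α := ℝ))
  set S : ℝ := 2 ^ k with hSdef
  have hS1 : 1 ≤ S := one_le_pow₀ (by norm_num)
  have hSC : C₀ ^ 2 < S := hk
  -- nonempty annuli
  have hann : ∀ ρ : ℝ, 0 < ρ → ∃ y : X, ρ ≤ dist y a ∧ dist y a < S * ρ := by
    intro ρ hρ
    by_contra hcon
    push_neg at hcon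
    have hsub : ball a (S * ρ) ⊆ ball a ρ := by
      intro x hx
      rcases lt_or_ge (dist x a) ρ with h | h
      · exact mem_ball.mpr h
      · exact absurd (mem_ball.mp hx) (not_lt.mpr (hcon x h))
    have h3 : ENNReal.ofReal (C₀⁻¹ * (S * ρ) ^ Q) ≤ ENNReal.ofReal (C₀ * ρ ^ Q) :=
      le_trans (hC₀ a (S * ρ) (by positivity)).1
        (le_trans (measure_mono hsub) (hC₀ a ρ hρ).2)
    rw [ENNReal.ofReal_le_ofReal_iff (by positivity),
      Real.mul_rpow (by positivity) hρ.le] at h3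
    have hρQ : (0:ℝ) < ρ ^ Q := Real.rpow_pos_of_pos hρ Q
    have hSQ : S ≤ S ^ Q := by
      nth_rewrite 1 [← Real.rpow_one S]
      exact Real.rpow_le_rpow_of_exponent_le hS1 (by linarith)
    have e1 : C₀ * (C₀⁻¹ * (S ^ Q * ρ ^ Q)) = S ^ Q * ρ ^ Q := by
      field_simp
    have h5 : S ^ Q * ρ ^ Q ≤ C₀ ^ 2 * ρ ^ Q := by
      calc S ^ Q * ρ ^ Q = C₀ * (C₀⁻¹ * (S ^ Q * ρ ^ Q)) := e1.symm
        _ ≤ C₀ * (C₀ * ρ ^ Q) := by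
            exact mul_le_mul_of_nonneg_left h3 hC₀pos.le
        _ = C₀ ^ 2 * ρ ^ Q := by ring
    have h6 : C₀ ^ 2 < S ^ Q := lt_of_lt_of_le hSC hSQ
    nlinarith [mul_lt_mul_of_pos_right h6 hρQ]
  -- constants
  set th : ℝ := (2:ℝ) ^ (Q - 2 * p) with hthdef
  have hth0 : 0 < th := Real.rpow_pos_of_pos two_pos _
  have hth1 : th < 1 := Real.rpow_lt_one_of_one_lt_of_neg one_lt_two (by linarith)
  have h1th : 0 < 1 - th := by linarith
  set Cu : ℝ := C₀ * (2:ℝ) ^ Q * (1 - th)⁻¹ with hCudef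
  have hCu : 0 < Cu := by
    have : (0:ℝ) < (2:ℝ) ^ Q := Real.rpow_pos_of_pos two_pos _
    have h2 : (0:ℝ) < (1 - th)⁻¹ := inv_pos.mpr h1th
    positivity
  set Cl : ℝ := C₀⁻¹ * (((2 * S + 2):ℝ) ^ (2 * p))⁻¹ with hCldef
  have hSt2 : (0:ℝ) < 2 * S + 2 := by linarith
  have hCl : 0 < Cl := by
    have : (0:ℝ) < ((2 * S + 2):ℝ) ^ (2 * p) := Real.rpow_pos_of_pos hSt2 _
    positivity
  refine ⟨max Cu Cl⁻¹, lt_of_lt_of_le hCu (le_max_left _ _), 1, one_pos, ?_⟩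
  intro r hr hr1
  simp only [dhat_infty_eq]
  set C : ℝ := max Cu Cl⁻¹ with hCdef
  set t : ℝ := r⁻¹ with htdef
  have ht1 : 1 < t := one_lt_inv_iff₀.mpr ⟨hr, hr1⟩
  have ht0 : 0 < t := by linarith
  have htr : t ^ (Q - 2 * p) = r ^ (2 * p - Q) := by
    rw [htdef, Real.inv_rpow hr.le, ← Real.rpow_neg hr.le, neg_sub]
  have hEeq : {x : X | (1 + dist x a)⁻¹ < r} = {x : X | t < 1 + dist x a} := by
    ext x
    have hx : (0:ℝ) < 1 + dist x a := by positivity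
    simp only [Set.mem_setOf_eq]
    exact inv_lt_comm₀ hx hr
  rw [hEeq]
  have hdistc : Continuous fun x : X => 1 + dist x a :=
    continuous_const.add (continuous_id.dist continuous_const)
  have hdistm : Measurable fun x : X => 1 + dist x a := hdistc.measurable
  have hwm : Measurable fun x : X => ENNReal.ofReal ((1 + dist x a) ^ (2 * p))⁻¹ := by
    apply Measurable.ennreal_ofReal
    apply Measurable.inv
    exact (hdistc.rpow_const fun x => Or.inr (by positivity)).measurable
  constructor
  · -- lower bound
    obtain ⟨y, hy1, hy2⟩ := hann (2 * t) (by positivity)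
    have hball : ball y t ⊆ {x : X | t < 1 + dist x a} := by
      intro x hx
      have hxy : dist x y < t := mem_ball.mp hx
      have h1 : dist y a ≤ dist y x + dist x a := dist_triangle y x a
      have h2 : dist y x = dist x y := dist_comm y x
      simp only [Set.mem_setOf_eq]
      linarith
    have hup : ∀ x ∈ ball y t, 1 + dist x a ≤ (2 * S + 2) * t := by
      intro x hx
      have hxy : dist x y < t := mem_ball.mp hx
      have h1 : dist x a ≤ dist x y + dist y a := dist_triangle x y a
      nlinarith
    have hid : Cl * t ^ (Q - 2 * p) = (((2 * S + 2) * t) ^ (2 * p))⁻¹ * (C₀⁻¹ * t ^ Q) := by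
      rw [hCldef, Real.mul_rpow hSt2.le ht0.le, Real.rpow_sub ht0, mul_inv, div_eq_mul_inv]
      ring
    have hw : (0:ℝ) < ((2 * S + 2) * t) ^ (2 * p) := Real.rpow_pos_of_pos (by positivity) _
    calc ENNReal.ofReal (C⁻¹ * r ^ (2 * p - Q))
        ≤ ENNReal.ofReal (Cl * t ^ (Q - 2 * p)) := by
          apply ENNReal.ofReal_le_ofReal
          rw [htr]
          apply mul_le_mul_of_nonneg_right _ (Real.rpow_pos_of_pos hr _).le
          have h := inv_anti₀ (inv_pos.mpr hCl) (le_max_right Cu Cl⁻¹)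
          rwa [inv_inv] at h
      _ ≤ (muHat μ a p) (ball y t) := by
          rw [muHat, withDensity_apply _ measurableSet_ball, hid]
          calc ENNReal.ofReal ((((2 * S + 2) * t) ^ (2 * p))⁻¹ * (C₀⁻¹ * t ^ Q))
              = ENNReal.ofReal ((((2 * S + 2) * t) ^ (2 * p))⁻¹) *
                  ENNReal.ofReal (C₀⁻¹ * t ^ Q) := ENNReal.ofReal_mul (by positivity)
            _ ≤ ENNReal.ofReal ((((2 * S + 2) * t) ^ (2 * p))⁻¹) * μ (ball y t) :=
                mul_le_mul_right (hC₀ y t ht0).1 _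
            _ = ∫⁻ _ in ball y t, ENNReal.ofReal ((((2 * S + 2) * t) ^ (2 * p))⁻¹) ∂μ :=
                (setLIntegral_const _ _).symm
            _ ≤ ∫⁻ x in ball y t, ENNReal.ofReal ((1 + dist x a) ^ (2 * p))⁻¹ ∂μ := by
                apply setLIntegral_mono hwm
                intro x hx
                apply ENNReal.ofReal_le_ofReal
                apply inv_anti₀ (Real.rpow_pos_of_pos (by positivity) _)
                exact Real.rpow_le_rpow (by positivity) (hup x hx) (by positivity)
      _ ≤ (muHat μ a p) {x : X | t < 1 + dist x a} := measure_mono hball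
  · -- upper bound
    set A : ℕ → Set X := fun j =>
      {x : X | 2 ^ j * t ≤ 1 + dist x a ∧ 1 + dist x a < 2 ^ (j + 1) * t} with hAdef
    have hAmeas : ∀ j, MeasurableSet (A j) := fun j =>
      (measurableSet_le measurable_const hdistm).inter
        (measurableSet_lt hdistm measurable_const)
    have hcover : {x : X | t < 1 + dist x a} ⊆ ⋃ j, A j := by
      intro x hx
      simp only [Set.mem_setOf_eq] at hx
      have hex : ∃ n : ℕ, 1 + dist x a < 2 ^ (n + 1) * t := by
        obtain ⟨n, hn⟩ := pow_unbounded_of_one_lt ((1 + dist x a) / t) (one_lt_two (α := ℝ))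
        rw [div_lt_iff₀ ht0] at hn
        refine ⟨n, lt_of_lt_of_le hn ?_⟩
        have : (2:ℝ) ^ n ≤ 2 ^ (n + 1) := by
          apply pow_le_pow_right₀ (by norm_num)
          omega
        nlinarith
      refine Set.mem_iUnion.mpr ⟨Nat.find hex, ?_, Nat.find_spec hex⟩
      rcases Nat.eq_zero_or_pos (Nat.find hex) with h0 | hpos
      · rw [h0]
        simpa using hx.le
      · obtain ⟨m, hm⟩ := Nat.exists_eq_succ_of_ne_zero hpos.ne'
        have hmin := Nat.find_min hex (by omega : m < Nat.find hex)
        rw [hm]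
        exact not_lt.mp hmin
    have hAj : ∀ j : ℕ, (muHat μ a p) (A j) ≤
        ENNReal.ofReal ((C₀ * (2:ℝ) ^ Q * t ^ (Q - 2 * p)) * th ^ j) := by
      intro j
      have h2j : (0:ℝ) < 2 ^ j := by positivity
      have hu : (0:ℝ) < 2 ^ j * t := by positivity
      rw [muHat, withDensity_apply _ (hAmeas j)]
      calc ∫⁻ x in A j, ENNReal.ofReal ((1 + dist x a) ^ (2 * p))⁻¹ ∂μ
          ≤ ∫⁻ _ in A j, ENNReal.ofReal ((((2:ℝ) ^ j * t) ^ (2 * p))⁻¹) ∂μ := by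
            apply setLIntegral_mono measurable_const
            intro x hx
            apply ENNReal.ofReal_le_ofReal
            apply inv_anti₀ (Real.rpow_pos_of_pos hu _)
            exact Real.rpow_le_rpow hu.le hx.1 (by positivity)
        _ = ENNReal.ofReal ((((2:ℝ) ^ j * t) ^ (2 * p))⁻¹) * μ (A j) :=
            setLIntegral_const _ _
        _ ≤ ENNReal.ofReal ((((2:ℝ) ^ j * t) ^ (2 * p))⁻¹) *
              ENNReal.ofReal (C₀ * ((2:ℝ) ^ (j + 1) * t) ^ Q) := by
            apply mul_le_mul_right
            have hsub : A j ⊆ ball a ((2:ℝ) ^ (j + 1) * t) := by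
              intro x hx
              have h2 := hx.2
              have h3 : (0:ℝ) ≤ dist x a := dist_nonneg
              rw [mem_ball]
              linarith
            exact le_trans (measure_mono hsub) (hC₀ a _ (by positivity)).2
        _ = ENNReal.ofReal ((((2:ℝ) ^ j * t) ^ (2 * p))⁻¹ * (C₀ * ((2:ℝ) ^ (j + 1) * t) ^ Q)) :=
            (ENNReal.ofReal_mul (by positivity)).symm
        _ = ENNReal.ofReal ((C₀ * (2:ℝ) ^ Q * t ^ (Q - 2 * p)) * th ^ j) := by
            congr 1
            have e1 : ((2:ℝ) ^ (j + 1) * t) = 2 * (2 ^ j * t) := by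
              rw [pow_succ]; ring
            have e2 : ((2:ℝ) ^ j * t) ^ (Q - 2 * p) = th ^ j * t ^ (Q - 2 * p) := by
              rw [Real.mul_rpow h2j.le ht0.le, ← Real.rpow_natCast (2:ℝ) j,
                ← Real.rpow_mul two_pos.le, hthdef, ← Real.rpow_natCast ((2:ℝ) ^ (Q - 2 * p)) j,
                ← Real.rpow_mul two_pos.le, mul_comm (j : ℝ)]
            have e3 : ((2:ℝ) ^ j * t) ^ (Q - 2 * p)
                = ((2:ℝ) ^ j * t) ^ Q / ((2:ℝ) ^ j * t) ^ (2 * p) :=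
              Real.rpow_sub hu _ _
            rw [e1, Real.mul_rpow two_pos.le hu.le,
              show C₀ * (2:ℝ) ^ Q * t ^ (Q - 2 * p) * th ^ j
                = C₀ * (2:ℝ) ^ Q * (th ^ j * t ^ (Q - 2 * p)) by ring,
              ← e2, e3, div_eq_mul_inv]
            ring
    calc (muHat μ a p) {x : X | t < 1 + dist x a}
        ≤ (muHat μ a p) (⋃ j, A j) := measure_mono hcover
      _ ≤ ∑' j, (muHat μ a p) (A j) := measure_iUnion_le _
      _ ≤ ∑' j, ENNReal.ofReal ((C₀ * (2:ℝ) ^ Q * t ^ (Q - 2 * p)) * th ^ j) :=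
          ENNReal.tsum_le_tsum hAj
      _ = ENNReal.ofReal (C₀ * (2:ℝ) ^ Q * t ^ (Q - 2 * p)) * ∑' j, ENNReal.ofReal (th ^ j) := by
          rw [← ENNReal.tsum_mul_left]
          exact tsum_congr fun j => ENNReal.ofReal_mul (by positivity)
      _ = ENNReal.ofReal (C₀ * (2:ℝ) ^ Q * t ^ (Q - 2 * p)) * ENNReal.ofReal ((1 - th)⁻¹) := by
          congr 1
          rw [tsum_congr fun j => ENNReal.ofReal_pow hth0.le j, ENNReal.tsum_geometric,
            ENNReal.ofReal_inv_of_pos h1th, ENNReal.ofReal_sub 1 hth0.le, ENNReal.ofReal_one]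
      _ = ENNReal.ofReal (Cu * t ^ (Q - 2 * p)) := by
          rw [← ENNReal.ofReal_mul (by positivity)]
          congr 1
          rw [hCudef]; ring
      _ ≤ ENNReal.ofReal (C * r ^ (2 * p - Q)) := by
          apply ENNReal.ofReal_le_ofReal
          rw [← htr]
          exact mul_le_mul_of_nonneg_right (le_max_left _ _) (Real.rpow_pos_of_pos ht0 _).le
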